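/- Any map J : {seminorms on ℝ²} → [0,∞) satisfying monotonicity (s ≥ s' implies J(s) ≥ J(s')), homogeneity (J(λ·s) = λ²·J(s) for λ ≥ 0), and SL₂-invariance (J(s∘T) = J(s) for T ∈ SL(2,ℝ)) is continuous with respect to the sup-metric on seminorms. -/

import Mathlib

open Matrix MeasureTheory Real

noncomputable section

/-- The Euclidean plane. -/
abbrev E2 := EuclideanSpace ℝ (Fin 2)

/-- `SL(2,ℝ)` as matrices of determinant one. -/
abbrev SL2 := Matrix.SpecialLinearGroup (Fin 2) ℝ

/-- The seminorm `v ↦ s (M v)`, i.e. `s ∘ M`. -/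
def compM (s : Seminorm ℝ E2) (M : Matrix (Fin 2) (Fin 2) ℝ) : Seminorm ℝ E2 :=
  s.comp (Matrix.toEuclideanLin M)

/-- A seminorm is a norm iff it is positive away from the origin. -/
def IsNorm (s : Seminorm ℝ E2) : Prop := ∀ v : E2, v ≠ 0 → 0 < s v

/-- Monotonicity of a functional on seminorms. -/
def Monot (J : Seminorm ℝ E2 → ℝ) : Prop := ∀ s s' : Seminorm ℝ E2, s' ≤ s → J s' ≤ J s

/-- Degree 2 homogeneity of a functional on seminorms. -/
def Homog (J : Seminorm ℝ E2 → ℝ) : Prop :=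
  ∀ (c : NNReal) (s : Seminorm ℝ E2), J (c • s) = (c : ℝ) ^ 2 * J s

/-- `SL₂`-invariance of a functional on seminorms. -/
def SL2inv (J : Seminorm ℝ E2 → ℝ) : Prop :=
  ∀ (s : Seminorm ℝ E2) (T : SL2), J (compM s (T : Matrix (Fin 2) (Fin 2) ℝ)) = J s

/-- The Reshetnyak energy `I²₊(s) = max_{v ∈ S¹} s(v)²`. -/
def Iplus (s : Seminorm ℝ E2) : ℝ := ⨆ v : Metric.sphere (0 : E2) 1, (s (v : E2)) ^ 2

/-- The unit ball of a seminorm. -/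
def unitBallS (s : Seminorm ℝ E2) : Set E2 := {v | s v ≤ 1}

/-- The ellipse `M(D̄)` is inscribed in the unit ball of `s`. -/
def ellipseIn (s : Seminorm ℝ E2) (M : Matrix (Fin 2) (Fin 2) ℝ) : Prop :=
  (Matrix.toEuclideanLin M) '' (Metric.closedBall 0 1) ⊆ unitBallS s

/-- The area of the largest ellipse inscribed in the unit ball of `s`
(the area of the Loewner ellipse); the ellipse `M(D̄)` has area `π |det M|`. -/
def LoewnerArea (s : Seminorm ℝ E2) : ℝ :=
  sSup {a : ℝ | ∃ M : Matrix (Fin 2) (Fin 2) ℝ, ellipseIn s M ∧ a = π * |M.det|}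

/-- The inscribed Riemannian (Ivanov) Jacobian `J^i(s) = π / |L|`. -/
def Ji (s : Seminorm ℝ E2) : ℝ := π / LoewnerArea s

/-- `s` is isotropic: some round disc `t·D̄` is inscribed in the unit ball of `s` and has at
least the area of every inscribed ellipse, i.e. the Loewner ellipse is a round disc. -/
def Isotropic (s : Seminorm ℝ E2) : Prop :=
  ∃ t : ℝ, 0 < t ∧ Metric.closedBall (0 : E2) t ⊆ unitBallS s ∧
    ∀ M : Matrix (Fin 2) (Fin 2) ℝ, ellipseIn s M → π * |M.det| ≤ π * t ^ 2

/-- A Jacobian (definition of area): monotone, degree-2 homogeneous, `SL₂`-invariant,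
normalized on the Euclidean norm. -/
def IsJacobian (J : Seminorm ℝ E2 → ℝ) : Prop :=
  (∀ s, 0 ≤ J s) ∧ Monot J ∧ Homog J ∧ SL2inv J ∧ J (normSeminorm ℝ E2) = 1

/- ### Auxiliary lemmas -/

lemma coord_le_norm (v : E2) (i : Fin 2) : |v i| ≤ ‖v‖ := by
  rw [EuclideanSpace.norm_eq]
  calc |v i| = Real.sqrt (‖v i‖ ^ 2) := by
        rw [Real.norm_eq_abs, sq_abs, Real.sqrt_sq_eq_abs]
    _ ≤ _ := Real.sqrt_le_sqrt
        (Finset.single_le_sum (fun j _ => sq_nonneg ‖v j‖) (Finset.mem_univ i))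

lemma decomp_E2 (v : E2) :
    v = v 0 • EuclideanSpace.single 0 1 + v 1 • EuclideanSpace.single 1 1 := by
  ext i
  fin_cases i <;> simp

/-- Extend a pointwise inequality on the unit sphere to all of `E2` by homogeneity. -/
lemma sphere_le {a b : Seminorm ℝ E2} (h : ∀ v : E2, ‖v‖ = 1 → a v ≤ b v) : a ≤ b := by
  intro v
  rcases eq_or_ne v 0 with rfl | hv
  · simp
  · have hn : ‖v‖ ≠ 0 := norm_ne_zero_iff.mpr hv
    have hu : ‖(‖v‖⁻¹ • v : E2)‖ = 1 := by
      rw [norm_smul, norm_inv, norm_norm, inv_mul_cancel₀ hn]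
    have h1 := h _ hu
    have ha : a v = ‖v‖ * a (‖v‖⁻¹ • v) := by
      rw [map_smul_eq_mul, Real.norm_eq_abs, abs_inv, abs_norm]
      field_simp
    have hb : b v = ‖v‖ * b (‖v‖⁻¹ • v) := by
      rw [map_smul_eq_mul, Real.norm_eq_abs, abs_inv, abs_norm]
      field_simp
    show a v ≤ b v
    rw [ha, hb]
    exact mul_le_mul_of_nonneg_left h1 (norm_nonneg v)

/-- Every seminorm on `E2` is continuous. -/
lemma seminorm_continuous (s : Seminorm ℝ E2) : Continuous s := by
  set K : ℝ := s (EuclideanSpace.single 0 1) + s (EuclideanSpace.single 1 1) with hK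
  have hbound : ∀ v : E2, s v ≤ K * ‖v‖ := by
    intro v
    calc s v = s (v 0 • EuclideanSpace.single 0 1 + v 1 • EuclideanSpace.single 1 1) := by
          rw [← decomp_E2]
      _ ≤ s (v 0 • EuclideanSpace.single 0 1) + s (v 1 • EuclideanSpace.single 1 1) :=
          map_add_le_add s _ _
      _ = |v 0| * s (EuclideanSpace.single 0 1) + |v 1| * s (EuclideanSpace.single 1 1) := by
          rw [map_smul_eq_mul, map_smul_eq_mul, Real.norm_eq_abs, Real.norm_eq_abs]
      _ ≤ ‖v‖ * s (EuclideanSpace.single 0 1) + ‖v‖ * s (EuclideanSpace.single 1 1) := by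
          gcongr <;> first | exact apply_nonneg s _ | exact coord_le_norm v _
      _ = K * ‖v‖ := by ring
  have hlip : LipschitzWith (Real.toNNReal K) s := by
    apply LipschitzWith.of_dist_le_mul
    intro u v
    have h1 : s u - s v ≤ s (u - v) := by
      have := map_add_le_add s (u - v) v
      simpa using this
    have h2 : s v - s u ≤ s (u - v) := by
      have := map_add_le_add s (v - u) u
      have hneg : s (v - u) = s (u - v) := by
        rw [← map_neg_eq_map s (v - u), neg_sub]
      simpa [hneg] using this
    have hK0 : 0 ≤ K := by
      have := apply_nonneg s (EuclideanSpace.single 0 1)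
      have := apply_nonneg s (EuclideanSpace.single 1 1)
      positivity
    calc dist (s u) (s v) = |s u - s v| := Real.dist_eq _ _
      _ ≤ s (u - v) := abs_le.mpr ⟨by linarith, h1⟩
      _ ≤ K * ‖u - v‖ := hbound _
      _ = (Real.toNNReal K : ℝ) * dist u v := by
          rw [Real.coe_toNNReal K hK0, dist_eq_norm]
  exact hlip.continuous

lemma unit_sq {v : E2} (h : ‖v‖ = 1) : v 0 ^ 2 + v 1 ^ 2 = 1 := by
  have h2 : Real.sqrt (∑ i : Fin 2, ‖v i‖ ^ 2) = 1 := by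
    rw [← EuclideanSpace.norm_eq]; exact h
  have h3 : (∑ i : Fin 2, ‖v i‖ ^ 2) = 1 := by
    have hnn : (0:ℝ) ≤ ∑ i : Fin 2, ‖v i‖ ^ 2 :=
      Finset.sum_nonneg fun i _ => sq_nonneg _
    nlinarith [Real.sq_sqrt hnn]
  simpa [Fin.sum_univ_two, Real.norm_eq_abs, sq_abs] using h3

/-- The (rotated) shear matrix `λ` along `(a,b)`, `λ⁻¹` along `(-b,a)`. -/
def shearM (a b lam : ℝ) : Matrix (Fin 2) (Fin 2) ℝ :=
  !![lam * a, -(lam⁻¹ * b); lam * b, lam⁻¹ * a]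

lemma shearM_det (a b lam : ℝ) (hab : a ^ 2 + b ^ 2 = 1) (hl : lam ≠ 0) :
    (shearM a b lam).det = 1 := by
  rw [shearM, Matrix.det_fin_two_of]
  field_simp
  linear_combination hab

def wvec (a b : ℝ) : E2 := (WithLp.equiv 2 (Fin 2 → ℝ)).symm ![-b, a]

lemma shear_apply (v₀ : E2) (lam : ℝ) (v : E2) :
    Matrix.toEuclideanLin (shearM (v₀ 0) (v₀ 1) lam) v
      = (lam * v 0) • v₀ + (lam⁻¹ * v 1) • wvec (v₀ 0) (v₀ 1) := by
  rw [Matrix.toEuclideanLin_apply]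
  ext i
  fin_cases i <;>
    simp [shearM, wvec, Matrix.mulVec, dotProduct, Fin.sum_univ_two,
      Matrix.vecHead, Matrix.vecTail] <;> ring

lemma wvec_norm (v₀ : E2) (h : ‖v₀‖ = 1) : ‖wvec (v₀ 0) (v₀ 1)‖ = 1 := by
  have hs := unit_sq h
  rw [EuclideanSpace.norm_eq]
  have h0 : (wvec (v₀ 0) (v₀ 1)) 0 = -(v₀ 1) := rfl
  have h1 : (wvec (v₀ 0) (v₀ 1)) 1 = v₀ 0 := rfl
  rw [Fin.sum_univ_two, h0, h1]
  simp only [Real.norm_eq_abs, sq_abs]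
  rw [show (-(v₀ 1)) ^ 2 + v₀ 0 ^ 2 = 1 by nlinarith, Real.sqrt_one]

/-- In the degenerate case, `J` of any seminorm dominated suitably is small:
if `s' v₀ ≤ δ` on a unit vector `v₀` and `s' w ≤ D` on the rotated unit vector `w`,
then `J s' ≤ (lam * δ + lam⁻¹ * D)^2 * J(norm)` for any `lam > 0`, by shearing. -/
lemma shear_bound (J : Seminorm ℝ E2 → ℝ) (hmon : Monot J) (hhom : Homog J)
    (hinv : SL2inv J) (s' : Seminorm ℝ E2) (v₀ : E2) (hv₀ : ‖v₀‖ = 1)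
    (lam δ D : ℝ) (hlam : 0 < lam) (hδ : 0 ≤ δ) (hD : 0 ≤ D)
    (h0 : s' v₀ ≤ δ) (hw : s' (wvec (v₀ 0) (v₀ 1)) ≤ D) :
    J s' ≤ (lam * δ + lam⁻¹ * D) ^ 2 * J (normSeminorm ℝ E2) := by
  set c : ℝ := lam * δ + lam⁻¹ * D with hc
  have hc0 : 0 ≤ c := by positivity
  set T : SL2 := ⟨shearM (v₀ 0) (v₀ 1) lam,
    shearM_det _ _ _ (unit_sq hv₀) (ne_of_gt hlam)⟩ with hT
  have hle : compM s' (shearM (v₀ 0) (v₀ 1) lam) ≤ (Real.toNNReal c) • normSeminorm ℝ E2 := by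
    rw [Seminorm.le_def]
    intro v
    have key : (compM s' (shearM (v₀ 0) (v₀ 1) lam)) v
        = s' ((lam * v 0) • v₀ + (lam⁻¹ * v 1) • wvec (v₀ 0) (v₀ 1)) := by
      rw [compM, Seminorm.comp_apply, shear_apply]
    rw [key]
    have step : s' ((lam * v 0) • v₀ + (lam⁻¹ * v 1) • wvec (v₀ 0) (v₀ 1))
        ≤ |lam * v 0| * s' v₀ + |lam⁻¹ * v 1| * s' (wvec (v₀ 0) (v₀ 1)) := by
      calc s' _ ≤ s' ((lam * v 0) • v₀) + s' ((lam⁻¹ * v 1) • wvec (v₀ 0) (v₀ 1)) :=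
            map_add_le_add s' _ _
        _ = |lam * v 0| * s' v₀ + |lam⁻¹ * v 1| * s' (wvec (v₀ 0) (v₀ 1)) := by
            rw [map_smul_eq_mul, map_smul_eq_mul, Real.norm_eq_abs, Real.norm_eq_abs]
    have hrhs : ((Real.toNNReal c) • normSeminorm ℝ E2) v = c * ‖v‖ := by
      rw [Seminorm.smul_apply]
      simp [NNReal.smul_def, Real.coe_toNNReal c hc0]
    rw [hrhs]
    have b1 : |lam * v 0| * s' v₀ ≤ lam * ‖v‖ * δ := by
      have : |lam * v 0| ≤ lam * ‖v‖ := by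
        rw [abs_mul, abs_of_pos hlam]
        exact mul_le_mul_of_nonneg_left (coord_le_norm v 0) (le_of_lt hlam)
      exact mul_le_mul this h0 (apply_nonneg s' _) (by positivity)
    have b2 : |lam⁻¹ * v 1| * s' (wvec (v₀ 0) (v₀ 1)) ≤ lam⁻¹ * ‖v‖ * D := by
      have : |lam⁻¹ * v 1| ≤ lam⁻¹ * ‖v‖ := by
        rw [abs_mul, abs_of_pos (inv_pos.mpr hlam)]
        exact mul_le_mul_of_nonneg_left (coord_le_norm v 1) (le_of_lt (inv_pos.mpr hlam))
      exact mul_le_mul this hw (apply_nonneg s' _) (by positivity)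
    calc s' _ ≤ _ := step
      _ ≤ lam * ‖v‖ * δ + lam⁻¹ * ‖v‖ * D := add_le_add b1 b2
      _ = c * ‖v‖ := by rw [hc]; ring
  calc J s' = J (compM s' (shearM (v₀ 0) (v₀ 1) lam)) := (hinv s' T).symm
    _ ≤ J ((Real.toNNReal c) • normSeminorm ℝ E2) :=
        hmon _ _ hle
    _ = c ^ 2 * J (normSeminorm ℝ E2) := by
        rw [hhom, Real.coe_toNNReal c hc0]

set_option maxHeartbeats 1000000 in
/-- A monotone, degree-2 homogeneous, `SL₂`-invariant functional on seminorms is continuous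
with respect to the sup-metric `d(s,s') = max_{v ∈ S¹} |s v - s' v|`. -/
theorem stmt1 (J : Seminorm ℝ E2 → ℝ) (hpos : ∀ s, 0 ≤ J s)
    (hmon : Monot J) (hhom : Homog J) (hinv : SL2inv J) :
    ∀ s : Seminorm ℝ E2, ∀ ε > (0 : ℝ), ∃ δ > (0 : ℝ), ∀ s' : Seminorm ℝ E2,
      (∀ v : E2, ‖v‖ = 1 → |s' v - s v| ≤ δ) → |J s' - J s| ≤ ε := by
  intro s ε hε
  by_cases hdeg : ∃ v : E2, ‖v‖ = 1 ∧ s v = 0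
  · -- Degenerate case: J of anything near s is small.
    obtain ⟨v₀, hv₀, hs0⟩ := hdeg
    set w : E2 := wvec (v₀ 0) (v₀ 1) with hwdef
    set C : ℝ := s w with hCdef
    have hC0 : 0 ≤ C := apply_nonneg s w
    set N : ℝ := J (normSeminorm ℝ E2) with hNdef
    have hN0 : 0 ≤ N := hpos _
    have hwn : ‖w‖ = 1 := wvec_norm v₀ hv₀
    refine ⟨min 1 (ε / ((2 + C) ^ 2 * N + 1)), lt_min one_pos (by positivity), ?_⟩
    intro s' hclose
    set δ : ℝ := min 1 (ε / ((2 + C) ^ 2 * N + 1)) with hδdef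
    have hδpos : 0 < δ := by
      rw [hδdef]; exact lt_min one_pos (by positivity)
    have hδ1 : δ ≤ 1 := min_le_left _ _
    have hδε : δ ≤ ε / ((2 + C) ^ 2 * N + 1) := min_le_right _ _
    -- generic bound for any seminorm within δ of s on the sphere
    have key : ∀ t : Seminorm ℝ E2, (∀ v : E2, ‖v‖ = 1 → |t v - s v| ≤ δ) → J t ≤ ε := by
      intro t ht
      have h0 : t v₀ ≤ δ := by
        have := ht v₀ hv₀
        rw [hs0] at this
        have := abs_le.mp this
        linarith [this.2]
      have hw' : t w ≤ C + δ := by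
        have := abs_le.mp (ht w hwn)
        linarith [this.2]
      set lam : ℝ := (Real.sqrt δ)⁻¹ with hlamdef
      have hsq : 0 < Real.sqrt δ := Real.sqrt_pos.mpr hδpos
      have hlam : 0 < lam := inv_pos.mpr hsq
      have hb := shear_bound J hmon hhom hinv t v₀ hv₀ lam δ (C + δ) hlam
        (le_of_lt hδpos) (by positivity) h0 hw'
      have hlamval : lam * δ + lam⁻¹ * (C + δ) = Real.sqrt δ * (1 + C + δ) := by
        rw [hlamdef, inv_inv]
        have hδeq : δ = Real.sqrt δ * Real.sqrt δ := (Real.mul_self_sqrt (le_of_lt hδpos)).symm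
        calc (Real.sqrt δ)⁻¹ * δ + Real.sqrt δ * (C + δ)
            = (Real.sqrt δ)⁻¹ * (Real.sqrt δ * Real.sqrt δ) + Real.sqrt δ * (C + δ) := by
              rw [← hδeq]
          _ = Real.sqrt δ + Real.sqrt δ * (C + δ) := by
              field_simp
          _ = Real.sqrt δ * (1 + C + δ) := by ring
      rw [hlamval] at hb
      have hsqbound : (Real.sqrt δ * (1 + C + δ)) ^ 2 ≤ δ * (2 + C) ^ 2 := by
        have h1 : Real.sqrt δ ^ 2 = δ := Real.sq_sqrt (le_of_lt hδpos)
        have h2 : (1 + C + δ) ≤ 2 + C := by linarith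
        have h3 : (1 + C + δ) ^ 2 ≤ (2 + C) ^ 2 := by nlinarith
        calc (Real.sqrt δ * (1 + C + δ)) ^ 2 = δ * (1 + C + δ) ^ 2 := by
              rw [mul_pow, h1]
          _ ≤ δ * (2 + C) ^ 2 := by nlinarith
      have : J t ≤ δ * ((2 + C) ^ 2 * N) := by
        calc J t ≤ (Real.sqrt δ * (1 + C + δ)) ^ 2 * N := hb
          _ ≤ δ * (2 + C) ^ 2 * N := by nlinarith
          _ = δ * ((2 + C) ^ 2 * N) := by ring
      have hfin : δ * ((2 + C) ^ 2 * N) ≤ ε := by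
        have hpos' : (0:ℝ) < (2 + C) ^ 2 * N + 1 := by positivity
        have := mul_le_mul_of_nonneg_right hδε (le_of_lt hpos')
        rw [div_mul_cancel₀ _ (ne_of_gt hpos')] at this
        nlinarith
      linarith
    have h1 : J s' ≤ ε := key s' hclose
    have h2 : J s ≤ ε := key s (fun v _ => by simp [le_of_lt hδpos])
    have h3 : 0 ≤ J s' := hpos s'
    have h4 : 0 ≤ J s := hpos s
    rw [abs_le]
    constructor <;> linarith
  · -- Nondegenerate case: s is bounded below on the sphere.
    push_neg at hdeg
    -- minimum of s on the compact unit sphere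
    have hcomp : IsCompact (Metric.sphere (0 : E2) 1) := isCompact_sphere 0 1
    have hne : (Metric.sphere (0 : E2) 1).Nonempty := by
      refine ⟨EuclideanSpace.single 0 1, ?_⟩
      simp [EuclideanSpace.norm_single]
    obtain ⟨vm, hvm, hmin⟩ := hcomp.exists_isMinOn hne
      ((seminorm_continuous s).continuousOn)
    have hvm1 : ‖vm‖ = 1 := by simpa using hvm
    set m : ℝ := s vm with hmdef
    have hm0 : 0 < m := lt_of_le_of_ne (apply_nonneg s vm) (Ne.symm (hdeg vm hvm1))
    have hminle : ∀ v : E2, ‖v‖ = 1 → m ≤ s v := by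
      intro v hv
      exact hmin (by simpa using hv)
    have hJs1 : (0:ℝ) < 3 * (J s + 1) := by nlinarith [hpos s]
    refine ⟨min (m / 2) (ε * m / (3 * (J s + 1))),
      lt_min (by positivity) (div_pos (mul_pos hε hm0) hJs1), ?_⟩
    intro s' hclose
    set δ : ℝ := min (m / 2) (ε * m / (3 * (J s + 1))) with hδdef
    have hδpos : 0 < δ := by
      rw [hδdef]; exact lt_min (by positivity) (div_pos (mul_pos hε hm0) hJs1)
    have hδm : δ ≤ m / 2 := min_le_left _ _
    have hδε : δ ≤ ε * m / (3 * (J s + 1)) := min_le_right _ _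
    set η : ℝ := δ / m with hηdef
    have hη0 : 0 < η := by positivity
    have hη1 : η ≤ 1 / 2 := by
      rw [hηdef, div_le_div_iff₀ hm0 (by norm_num)]
      linarith
    -- upper seminorm bound
    have hup : s' ≤ (Real.toNNReal (1 + η)) • s := by
      apply sphere_le
      intro v hv
      have hcl := abs_le.mp (hclose v hv)
      have hms : m ≤ s v := hminle v hv
      have hδs : δ ≤ η * s v := by
        rw [hηdef]
        rw [div_mul_eq_mul_div, le_div_iff₀ hm0] at *
        nlinarith
      have : s' v ≤ (1 + η) * s v := by nlinarith [hcl.2]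
      calc s' v ≤ (1 + η) * s v := this
        _ = ((Real.toNNReal (1 + η)) • s) v := by
            rw [Seminorm.smul_apply, NNReal.smul_def,
              Real.coe_toNNReal _ (by linarith : (0:ℝ) ≤ 1 + η)]
            rfl
    -- lower seminorm bound
    have hlo : (Real.toNNReal (1 - η)) • s ≤ s' := by
      apply sphere_le
      intro v hv
      have hcl := abs_le.mp (hclose v hv)
      have hms : m ≤ s v := hminle v hv
      have hδs : δ ≤ η * s v := by
        rw [hηdef]
        rw [div_mul_eq_mul_div, le_div_iff₀ hm0] at *
        nlinarith
      have hgoal : (1 - η) * s v ≤ s' v := by nlinarith [hcl.1]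
      calc ((Real.toNNReal (1 - η)) • s) v = (1 - η) * s v := by
            rw [Seminorm.smul_apply, NNReal.smul_def,
              Real.coe_toNNReal _ (by linarith : (0:ℝ) ≤ 1 - η)]
            rfl
        _ ≤ s' v := hgoal
    have hub : J s' ≤ (1 + η) ^ 2 * J s := by
      calc J s' ≤ J ((Real.toNNReal (1 + η)) • s) := hmon _ _ hup
        _ = (1 + η) ^ 2 * J s := by
            rw [hhom, Real.coe_toNNReal _ (by linarith : (0:ℝ) ≤ 1 + η)]
    have hlb : (1 - η) ^ 2 * J s ≤ J s' := by
      calc (1 - η) ^ 2 * J s = J ((Real.toNNReal (1 - η)) • s) := by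
            rw [hhom, Real.coe_toNNReal _ (by linarith : (0:ℝ) ≤ 1 - η)]
        _ ≤ J s' := hmon _ _ hlo
    have hJs0 : 0 ≤ J s := hpos s
    have habs : |J s' - J s| ≤ 3 * η * J s := by
      rw [abs_le]
      constructor
      · nlinarith
      · nlinarith
    have hfin : 3 * η * J s ≤ ε := by
      have hJ1 : (0:ℝ) < 3 * (J s + 1) := by positivity
      have h1 : η ≤ ε / (3 * (J s + 1)) := by
        rw [hηdef, div_le_div_iff₀ hm0 hJ1]
        rw [le_div_iff₀ hJ1] at hδε
        nlinarith
      have h2 : 3 * η * J s ≤ 3 * (ε / (3 * (J s + 1))) * J s := by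
        apply mul_le_mul_of_nonneg_right _ hJs0
        nlinarith
      have h3 : 3 * (ε / (3 * (J s + 1))) * J s ≤ ε := by
        have heq : 3 * (ε / (3 * (J s + 1))) * J s = ε * (J s / (J s + 1)) := by
          field_simp
        have hle1 : J s / (J s + 1) ≤ 1 := by
          rw [div_le_one (by linarith)]
          linarith
        rw [heq]
        calc ε * (J s / (J s + 1)) ≤ ε * 1 :=
              mul_le_mul_of_nonneg_left hle1 (le_of_lt hε)
          _ = ε := mul_one ε
      linarith
    linarith
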